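/- For a prime p with p ≡ 2 (mod 3) and p ≠ 2, the 3-Sylow subgroups of GL_m(F_p) are abelian for all m ≤ 5. -/

import Mathlib

open Matrix Pointwise

/-- If a finite group has an abelian subgroup of full `q`-power order,
then all its `q`-Sylow subgroups are abelian. -/
private lemma aux_sylow_abelian {G : Type*} [Group G] [Finite G] {q : ℕ} [Fact q.Prime]
    (K : Subgroup G) (hK : ∀ a b : G, a ∈ K → b ∈ K → a * b = b * a)
    (hcard : Nat.card K = q ^ (Nat.card G).factorization q) :
    ∀ P : Sylow q G, ∀ x y : (P : Subgroup G), x * y = y * x := by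
  intro P x y
  obtain ⟨g, hg⟩ := MulAction.exists_smul_eq G (Sylow.ofCard K hcard) P
  have hx : (x : G) ∈ MulAut.conj g • ((Sylow.ofCard K hcard : Sylow q G) : Set G) := by
    rw [← Sylow.coe_smul, hg]; exact x.2
  have hy : (y : G) ∈ MulAut.conj g • ((Sylow.ofCard K hcard : Sylow q G) : Set G) := by
    rw [← Sylow.coe_smul, hg]; exact y.2
  obtain ⟨a, ha, hax⟩ := Set.mem_smul_set.mp hx
  obtain ⟨b, hb, hby⟩ := Set.mem_smul_set.mp hy
  have : (x : G) * y = (y : G) * x := by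
    rw [← hax, ← hby, MulAut.smul_def, MulAut.smul_def, ← _root_.map_mul, ← _root_.map_mul,
      hK a b ha hb]
  exact Subtype.ext this

/-- Embedding the unit group of a commutative algebra of dimension `m`
over `F_p` gives abelian Sylow subgroups of `GL m (F_p)` whenever the
`3`-adic valuations agree. -/
private lemma sylow3_of_units (p m : ℕ) [Fact p.Prime] (R : Type) [CommRing R]
    [Algebra (ZMod p) R] [Finite R] (bb : Module.Basis (Fin m) (ZMod p) R)
    (hv : (Nat.card Rˣ).factorization 3
        = (Nat.card (GL (Fin m) (ZMod p))).factorization 3) :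
    ∀ P : Sylow 3 (GL (Fin m) (ZMod p)),
      ∀ x y : (P : Subgroup (GL (Fin m) (ZMod p))), x * y = y * x := by
  haveI : Fact (Nat.Prime 3) := ⟨Nat.prime_three⟩
  set g : R →* Matrix (Fin m) (Fin m) (ZMod p) :=
    (((algEquivMatrix bb).toAlgHom.comp (Algebra.lmul (ZMod p) R)).toRingHom).toMonoidHom
    with hgdef
  have hg : Function.Injective g := by
    intro a b h
    exact Algebra.lmul_injective ((algEquivMatrix bb).injective h)
  set f : Rˣ →* GL (Fin m) (ZMod p) := Units.map g with hfdef
  have hf : Function.Injective f := Units.map_injective hg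
  let P0 : Sylow 3 Rˣ := Classical.arbitrary _
  set K : Subgroup (GL (Fin m) (ZMod p)) := Subgroup.map f P0 with hKdef
  have hcardK : Nat.card K = Nat.card P0 :=
    Nat.card_congr ((P0 : Subgroup Rˣ).equivMapOfInjective f hf).toEquiv.symm
  have hcard : Nat.card K = 3 ^ (Nat.card (GL (Fin m) (ZMod p))).factorization 3 := by
    rw [hcardK, P0.card_eq_multiplicity, hv]
  refine aux_sylow_abelian K ?_ hcard
  rintro a b ha hb
  rw [hKdef, Subgroup.mem_map] at ha hb
  obtain ⟨a', _, rfl⟩ := ha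
  obtain ⟨b', _, rfl⟩ := hb
  rw [← _root_.map_mul f, ← _root_.map_mul f, mul_comm a' b']

theorem sylow3_GL_abelian (p : ℕ) (hp : p.Prime) (hmod : p % 3 = 2) (hp2 : p ≠ 2) :
    ∀ m ≤ 5, ∀ P : Sylow 3 (GL (Fin m) (ZMod p)),
      ∀ x y : (P : Subgroup (GL (Fin m) (ZMod p))), x * y = y * x := by
  haveI : Fact p.Prime := ⟨hp⟩
  have hp0 : p ≠ 0 := hp.pos.ne'
  have hp1 : 1 < p := hp.one_lt
  -- generic cardinality of GL
  have hGL : ∀ m' : ℕ,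
      Nat.card (GL (Fin m') (ZMod p)) = ∏ i ∈ Finset.range m', (p ^ m' - p ^ i) := by
    intro m'
    rw [Matrix.card_GL_field, ZMod.card,
      Fin.prod_univ_eq_prod_range (fun i => p ^ m' - p ^ i) m']
  -- 3-adic valuation bookkeeping
  have hne : ∀ k : ℕ, k ≠ 0 → p ^ k - 1 ≠ 0 := fun k hk =>
    Nat.sub_ne_zero_of_lt (Nat.one_lt_pow hk hp.one_lt)
  have hpk : ∀ k : ℕ, p ^ k % 3 = 2 ^ k % 3 := fun k => by rw [Nat.pow_mod, hmod]
  have npd : ∀ n : ℕ, n % 3 ≠ 0 → n.factorization 3 = 0 := fun n h =>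
    Nat.factorization_eq_zero_of_not_dvd (fun hd => h (by omega))
  set a := (p ^ 2 - 1).factorization 3 with ha
  have v1 : (p - 1).factorization 3 = 0 := npd _ (by omega)
  have v3 : (p ^ 3 - 1).factorization 3 = 0 := by
    have := hpk 3; have h1 : 1 < p ^ 3 := Nat.one_lt_pow (by norm_num) hp.one_lt
    exact npd _ (by omega)
  have v5 : (p ^ 5 - 1).factorization 3 = 0 := by
    have := hpk 5; have h1 : 1 < p ^ 5 := Nat.one_lt_pow (by norm_num) hp.one_lt
    exact npd _ (by omega)
  have vp : (p : ℕ).factorization 3 = 0 := npd _ (by omega)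
  have vmul : ∀ x y : ℕ, x ≠ 0 → y ≠ 0 →
      (x * y).factorization 3 = x.factorization 3 + y.factorization 3 := by
    intro x y hx hy
    rw [Nat.factorization_mul hx hy]; rfl
  have vpow : ∀ i : ℕ, (p ^ i).factorization 3 = 0 := by
    intro i
    rw [Nat.factorization_pow]
    simp [vp]
  have v4 : (p ^ 4 - 1).factorization 3 = a := by
    have e : p ^ 4 - 1 = (p ^ 2 + 1) * (p ^ 2 - 1) := by
      have := Nat.sq_sub_sq (p ^ 2) 1
      rw [one_pow, ← pow_mul] at this
      simpa using this
    have h2 : p ^ 2 + 1 ≠ 0 := by positivity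
    have v2' : (p ^ 2 + 1).factorization 3 = 0 := by
      have := hpk 2; exact npd _ (by omega)
    rw [e, vmul _ _ h2 (hne 2 (by norm_num)), v2', zero_add]
  have esub : ∀ i k : ℕ, p ^ (i + k) - p ^ i = p ^ i * (p ^ k - 1) := by
    intro i k
    rw [Nat.mul_sub, mul_one, pow_add]
  have n1 : p - 1 ≠ 0 := by omega
  have n2 : p ^ 2 - 1 ≠ 0 := hne 2 (by norm_num)
  have n3 : p ^ 3 - 1 ≠ 0 := hne 3 (by norm_num)
  have n4 : p ^ 4 - 1 ≠ 0 := hne 4 (by norm_num)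
  have n5 : p ^ 5 - 1 ≠ 0 := hne 5 (by norm_num)
  have np : ∀ i : ℕ, p ^ i ≠ 0 := fun i => pow_ne_zero i hp0
  -- main case split
  intro m hm
  interval_cases m
  · -- m = 0
    intro P x y
    exact Subtype.ext (Units.ext (by ext i j; exact i.elim0))
  · -- m = 1
    refine sylow3_of_units p 1 (ZMod p) (Module.Basis.singleton (Fin 1) (ZMod p)) ?_
    rw [hGL 1, Nat.card_eq_fintype_card, ZMod.card_units p]
    simp [pow_one]
  · -- m = 2
    refine sylow3_of_units p 2 (GaloisField p 2)
      (Module.finBasisOfFinrankEq _ _ (GaloisField.finrank p (by norm_num))) ?_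
    have hcu : Nat.card (GaloisField p 2)ˣ = p ^ 2 - 1 := by
      rw [Nat.card_units, GaloisField.card p 2 (by norm_num)]
    rw [hcu, hGL 2]
    simp only [Finset.prod_range_succ, Finset.prod_range_zero, one_mul, pow_zero, pow_one]
    have e1 : p ^ 2 - p = p * (p - 1) := by
      have := esub 1 1; simpa using this
    rw [e1, vmul _ _ n2 (Nat.mul_ne_zero hp0 n1),
        vmul _ _ hp0 n1, vp, v1]
    omega
  · -- m = 3
    refine sylow3_of_units p 3 (GaloisField p 2 × ZMod p)
      (Module.finBasisOfFinrankEq _ _ ?_) ?_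
    · rw [Module.finrank_prod, GaloisField.finrank p (by norm_num), Module.finrank_self]
    · have hcu : Nat.card (GaloisField p 2 × ZMod p)ˣ = (p ^ 2 - 1) * (p - 1) := by
        rw [Nat.card_congr MulEquiv.prodUnits.toEquiv, Nat.card_prod,
          Nat.card_units, GaloisField.card p 2 (by norm_num),
          Nat.card_eq_fintype_card, ZMod.card_units p]
      rw [hcu, hGL 3]
      simp only [Finset.prod_range_succ, Finset.prod_range_zero, one_mul, pow_zero, pow_one]
      have e1 : p ^ 3 - p = p * (p ^ 2 - 1) := by have := esub 1 2; simpa using this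
      have e2 : p ^ 3 - p ^ 2 = p ^ 2 * (p - 1) := by have := esub 2 1; simpa using this
      have t1 : p * (p ^ 2 - 1) ≠ 0 := Nat.mul_ne_zero hp0 n2
      have t2 : p ^ 2 * (p - 1) ≠ 0 := Nat.mul_ne_zero (np 2) n1
      rw [e1, e2,
        vmul _ _ n2 n1,
        vmul _ _ (Nat.mul_ne_zero n3 t1) t2,
        vmul _ _ n3 t1,
        vmul _ _ hp0 n2,
        vmul _ _ (np 2) n1]
      rw [v1, v3, vp, vpow]
      omega
  · -- m = 4
    refine sylow3_of_units p 4 (GaloisField p 2 × GaloisField p 2)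
      (Module.finBasisOfFinrankEq _ _ ?_) ?_
    · rw [Module.finrank_prod, GaloisField.finrank p (by norm_num)]
    · have hcu : Nat.card (GaloisField p 2 × GaloisField p 2)ˣ
          = (p ^ 2 - 1) * (p ^ 2 - 1) := by
        rw [Nat.card_congr MulEquiv.prodUnits.toEquiv, Nat.card_prod,
          Nat.card_units, GaloisField.card p 2 (by norm_num)]
      rw [hcu, hGL 4]
      simp only [Finset.prod_range_succ, Finset.prod_range_zero, one_mul, pow_zero, pow_one]
      have e1 : p ^ 4 - p = p * (p ^ 3 - 1) := by have := esub 1 3; simpa using this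
      have e2 : p ^ 4 - p ^ 2 = p ^ 2 * (p ^ 2 - 1) := by have := esub 2 2; simpa using this
      have e3 : p ^ 4 - p ^ 3 = p ^ 3 * (p - 1) := by have := esub 3 1; simpa using this
      have t1 : p * (p ^ 3 - 1) ≠ 0 := Nat.mul_ne_zero hp0 n3
      have t2 : p ^ 2 * (p ^ 2 - 1) ≠ 0 := Nat.mul_ne_zero (np 2) n2
      have t3 : p ^ 3 * (p - 1) ≠ 0 := Nat.mul_ne_zero (np 3) n1
      rw [e1, e2, e3,
        vmul _ _ n2 n2,
        vmul _ _ (Nat.mul_ne_zero (Nat.mul_ne_zero n4 t1) t2) t3,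
        vmul _ _ (Nat.mul_ne_zero n4 t1) t2,
        vmul _ _ n4 t1,
        vmul _ _ hp0 n3,
        vmul _ _ (np 2) n2,
        vmul _ _ (np 3) n1]
      rw [v1, v3, v4, vp, vpow, vpow]
      omega
  · -- m = 5
    refine sylow3_of_units p 5 (GaloisField p 2 × GaloisField p 2 × ZMod p)
      (Module.finBasisOfFinrankEq _ _ ?_) ?_
    · rw [Module.finrank_prod, Module.finrank_prod,
        GaloisField.finrank p (by norm_num), Module.finrank_self]
    · have hcu : Nat.card (GaloisField p 2 × GaloisField p 2 × ZMod p)ˣ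
          = (p ^ 2 - 1) * ((p ^ 2 - 1) * (p - 1)) := by
        rw [Nat.card_congr MulEquiv.prodUnits.toEquiv, Nat.card_prod,
          Nat.card_congr MulEquiv.prodUnits.toEquiv, Nat.card_prod,
          Nat.card_units, GaloisField.card p 2 (by norm_num),
          Nat.card_eq_fintype_card, ZMod.card_units p]
      rw [hcu, hGL 5]
      simp only [Finset.prod_range_succ, Finset.prod_range_zero, one_mul, pow_zero, pow_one]
      have e1 : p ^ 5 - p = p * (p ^ 4 - 1) := by have := esub 1 4; simpa using this
      have e2 : p ^ 5 - p ^ 2 = p ^ 2 * (p ^ 3 - 1) := by have := esub 2 3; simpa using this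
      have e3 : p ^ 5 - p ^ 3 = p ^ 3 * (p ^ 2 - 1) := by have := esub 3 2; simpa using this
      have e4 : p ^ 5 - p ^ 4 = p ^ 4 * (p - 1) := by have := esub 4 1; simpa using this
      have t1 : p * (p ^ 4 - 1) ≠ 0 := Nat.mul_ne_zero hp0 n4
      have t2 : p ^ 2 * (p ^ 3 - 1) ≠ 0 := Nat.mul_ne_zero (np 2) n3
      have t3 : p ^ 3 * (p ^ 2 - 1) ≠ 0 := Nat.mul_ne_zero (np 3) n2
      have t4 : p ^ 4 * (p - 1) ≠ 0 := Nat.mul_ne_zero (np 4) n1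
      rw [e1, e2, e3, e4,
        vmul _ _ n2 (Nat.mul_ne_zero n2 n1),
        vmul _ _ n2 n1,
        vmul _ _ (Nat.mul_ne_zero (Nat.mul_ne_zero (Nat.mul_ne_zero n5 t1) t2) t3) t4,
        vmul _ _ (Nat.mul_ne_zero (Nat.mul_ne_zero n5 t1) t2) t3,
        vmul _ _ (Nat.mul_ne_zero n5 t1) t2,
        vmul _ _ n5 t1,
        vmul _ _ hp0 n4,
        vmul _ _ (np 2) n3,
        vmul _ _ (np 3) n2,
        vmul _ _ (np 4) n1]
      rw [v1, v3, v4, v5, vp, vpow, vpow, vpow]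
      omega
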